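/- Characterization of the f-ESS value (Theorem 2.1, ESS part, due to Funaki–Koriyama): Suppose f ∈ F satisfies: (1) Symmetry: f_i(v) = f_{π(i)}(πv) for every v ∈ V, every permutation π of N and every i ∈ N, where πv(πS) = v(S) for all S ⊆ N; (2) for every v ∈ V there exists c ∈ ℝ such that for every x ∈ ℝ^N each of whose components x_i equals either c or f_i(v), there exists w ∈ V with f(w) = x, and moreover if x_i = c for all i ∈ N then w can be chosen with all players pairwise symmetric in w; (3) for all v, w ∈ V, if v(S) = w(S) for every proper subset S ⊊ N, then f(v) = f(w). Then a solution φ satisfies (E), (ETS), and (f-IES) if and only if φ_i(v) = f_i(v) + (1/n)·(v(N) − Σ_{k∈N} f_k(v)) for every v ∈ V and i ∈ N. -/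

import Mathlib

/-!
Theorem 2.1 (ESS part, Funaki–Koriyama): characterization of the f-ESS value.
-/

namespace Stmt13

/-- A TU-game on the player set `N`: a function on coalitions vanishing at `∅`. -/
abbrev Game (N : Type*) := {v : Finset N → ℝ // v ∅ = 0}

/-- A solution assigns to each game a payoff vector. -/
abbrev Solution (N : Type*) := Game N → N → ℝ

variable {N : Type*} [Fintype N] [DecidableEq N]

/-- The game `πv` defined by `πv(πS) = v(S)`, i.e. `πv(T) = v(π⁻¹ T)`. -/
def permGame (π : Equiv.Perm N) (v : Game N) : Game N :=
  ⟨fun S => v.1 (S.image π.symm), by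
    show v.1 ((∅ : Finset N).image π.symm) = 0
    rw [Finset.image_empty]
    exact v.2⟩

/-- Players `i` and `j` are symmetric in the game `v`. -/
def SymmetricIn (v : Game N) (i j : N) : Prop :=
  ∀ S : Finset N, i ∉ S → j ∉ S →
    v.1 (insert i S) - v.1 S = v.1 (insert j S) - v.1 S

/-- Efficiency (E). -/
def Efficient (φ : Solution N) : Prop :=
  ∀ v : Game N, ∑ i, φ v i = v.1 Finset.univ

/-- Equal treatment for a solution (ETS): symmetric players get equal payoffs. -/
def ETS (φ : Solution N) : Prop :=
  ∀ (v : Game N) (i j : N), SymmetricIn v i j → φ v i = φ v j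

/-- The `f`-individualistic property for equal surplus (`f`-IES). -/
def IES (f φ : Solution N) : Prop :=
  ∀ (v w : Game N) (i : N),
    v.1 Finset.univ - ∑ k, f v k = w.1 Finset.univ - ∑ k, f w k →
    f v i = f w i → φ v i = φ w i

/-- Adjust the grand-coalition value of a game. -/
def adjust [Nonempty N] (w : Game N) (t : ℝ) : Game N :=
  ⟨fun S => if S = Finset.univ then t else w.1 S, by
    show (if (∅ : Finset N) = Finset.univ then t else w.1 ∅) = 0
    rw [if_neg (fun h => (Finset.univ_nonempty (α := N)).ne_empty h.symm)]
    exact w.2⟩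

lemma adjust_univ [Nonempty N] (w : Game N) (t : ℝ) :
    (adjust w t).1 Finset.univ = t := if_pos rfl

lemma adjust_ne [Nonempty N] (w : Game N) (t : ℝ) {S : Finset N} (h : S ≠ Finset.univ) :
    (adjust w t).1 S = w.1 S := if_neg h

lemma symmetricIn_adjust [Nonempty N] {w : Game N} {t : ℝ} {i j : N}
    (h : SymmetricIn w i j) : SymmetricIn (adjust w t) i j := by
  intro S hi hj
  by_cases hij : i = j
  · subst hij; ring
  · have hS : S ≠ Finset.univ := fun hS => hi (hS ▸ Finset.mem_univ i)
    have hiS : insert i S ≠ Finset.univ := fun hS => hj (by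
      have := hS ▸ Finset.mem_univ j
      rcases Finset.mem_insert.1 this with h' | h'
      · exact absurd h'.symm hij
      · exact h')
    have hjS : insert j S ≠ Finset.univ := fun hS => hi (by
      have := hS ▸ Finset.mem_univ i
      rcases Finset.mem_insert.1 this with h' | h'
      · exact absurd h' hij
      · exact h')
    rw [adjust_ne _ _ hS, adjust_ne _ _ hiS, adjust_ne _ _ hjS]
    exact h S hi hj

set_option linter.unusedSectionVars false in
lemma swap_invariant {v : Game N} {i j : N} (h : SymmetricIn v i j) (T : Finset N) :
    v.1 (T.image (Equiv.swap i j)) = v.1 T := by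
  by_cases hij : i = j
  · subst hij; simp
  have hmem : ∀ a : N, a ∈ T.image (Equiv.swap i j) ↔ Equiv.swap i j a ∈ T := by
    intro a
    constructor
    · intro ha
      obtain ⟨b, hb, rfl⟩ := Finset.mem_image.1 ha
      rwa [Equiv.swap_apply_self]
    · intro ha
      exact Finset.mem_image.2 ⟨_, ha, Equiv.swap_apply_self i j a⟩
  by_cases hi : i ∈ T <;> by_cases hj : j ∈ T
  · have himg : T.image (Equiv.swap i j) = T := by
      ext a
      rw [hmem]
      rcases eq_or_ne a i with rfl | hai
      · simp [Equiv.swap_apply_left, hi, hj]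
      rcases eq_or_ne a j with rfl | haj
      · simp [Equiv.swap_apply_right, hi, hj]
      · rw [Equiv.swap_apply_of_ne_of_ne hai haj]
    rw [himg]
  · have hT : T = insert i (T.erase i) := (Finset.insert_erase hi).symm
    have himg : T.image (Equiv.swap i j) = insert j (T.erase i) := by
      ext a
      rw [hmem, Finset.mem_insert, Finset.mem_erase]
      rcases eq_or_ne a i with rfl | hai
      · simp [hij, Ne.symm hij, Equiv.swap_apply_left, hj]
      rcases eq_or_ne a j with rfl | haj
      · simp [hij, Ne.symm hij, Equiv.swap_apply_right, hi]
      · rw [Equiv.swap_apply_of_ne_of_ne hai haj]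
        simp [hai, haj]
    have hkey := h (T.erase i) (Finset.notMem_erase i T)
      (fun hm => hj (Finset.mem_of_mem_erase hm))
    rw [himg]
    conv_rhs => rw [hT]
    linarith
  · have hT : T = insert j (T.erase j) := (Finset.insert_erase hj).symm
    have himg : T.image (Equiv.swap i j) = insert i (T.erase j) := by
      ext a
      rw [hmem, Finset.mem_insert, Finset.mem_erase]
      rcases eq_or_ne a j with rfl | haj
      · simp [hij, Ne.symm hij, Equiv.swap_apply_right, hi]
      rcases eq_or_ne a i with rfl | hai
      · simp [hij, Ne.symm hij, Equiv.swap_apply_left, hj]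
      · rw [Equiv.swap_apply_of_ne_of_ne hai haj]
        simp [hai, haj]
    have hkey := h (T.erase j) (fun hm => hi (Finset.mem_of_mem_erase hm))
      (Finset.notMem_erase j T)
    rw [himg]
    conv_rhs => rw [hT]
    linarith
  · have himg : T.image (Equiv.swap i j) = T := by
      ext a
      rw [hmem]
      rcases eq_or_ne a i with rfl | hai
      · simp [Equiv.swap_apply_left, hi, hj]
      rcases eq_or_ne a j with rfl | haj
      · simp [Equiv.swap_apply_right, hi, hj]
      · rw [Equiv.swap_apply_of_ne_of_ne hai haj]
    rw [himg]

theorem fESS_characterization [Nonempty N]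
    (f : Solution N)
    (h1 : ∀ (v : Game N) (π : Equiv.Perm N) (i : N), f v i = f (permGame π v) (π i))
    (h2 : ∀ v : Game N, ∃ c : ℝ, ∀ x : N → ℝ,
      (∀ i, x i = c ∨ x i = f v i) →
      ∃ w : Game N, (∀ i, f w i = x i) ∧
        ((∀ i, x i = c) → ∀ i j, SymmetricIn w i j))
    (h3 : ∀ v w : Game N,
      (∀ S : Finset N, S ≠ Finset.univ → v.1 S = w.1 S) → ∀ i, f v i = f w i)
    (φ : Solution N) :
    (Efficient φ ∧ ETS φ ∧ IES f φ) ↔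
      (∀ (v : Game N) (i : N),
        φ v i = f v i + (1 / (Fintype.card N : ℝ)) * (v.1 Finset.univ - ∑ k, f v k)) := by
  have hn0 : (Fintype.card N : ℝ) ≠ 0 := by
    exact_mod_cast Nat.pos_iff_ne_zero.1 Fintype.card_pos
  have hadjf : ∀ (w : Game N) (t : ℝ) (k : N), f (adjust w t) k = f w k := by
    intro w t k
    exact h3 (adjust w t) w (fun S hS => adjust_ne w t hS) k
  constructor
  · rintro ⟨hE, hETS, hIES⟩ v i
    obtain ⟨c, hc⟩ := h2 v
    set nR : ℝ := (Fintype.card N : ℝ) with hnR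
    set s : ℝ := v.1 Finset.univ - ∑ k, f v k with hs
    -- the all-c game
    obtain ⟨w0, hw0f, hw0sym⟩ := hc (fun _ => c) (fun _ => Or.inl rfl)
    have hw0sym' := hw0sym (fun _ => rfl)
    set w0' : Game N := adjust w0 (s + ∑ k, f w0 k) with hw0'
    have hw0'f : ∀ k, f w0' k = c := fun k => (hadjf _ _ k).trans (hw0f k)
    have hw0's : w0'.1 Finset.univ - ∑ k, f w0' k = s := by
      rw [adjust_univ]
      have : ∑ k, f w0' k = ∑ k, f w0 k := Finset.sum_congr rfl fun k _ => hadjf _ _ k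
      rw [this]; ring
    have hw0'val : ∀ j, φ w0' j = c + s / nR := by
      intro j
      have hall : ∀ k, φ w0' k = φ w0' j :=
        fun k => hETS w0' k j (symmetricIn_adjust (hw0sym' k j))
      have hsum : ∑ k, φ w0' k = s + ∑ k, f w0 k := by
        rw [hE w0']; exact adjust_univ _ _
      rw [Finset.sum_congr rfl (fun k _ => hall k), Finset.sum_const,
        Finset.card_univ, nsmul_eq_mul] at hsum
      have hfc : ∑ k, f w0 k = nR * c := by
        rw [Finset.sum_congr rfl (fun k _ => hw0f k), Finset.sum_const,
          Finset.card_univ, nsmul_eq_mul]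
      rw [hfc] at hsum
      field_simp at hsum ⊢
      linarith
    -- the game with x i = f v i, x j = c otherwise
    set x : N → ℝ := fun k => if k = i then f v i else c with hx
    obtain ⟨w1, hw1f, -⟩ := hc x (by
      intro k
      by_cases hk : k = i
      · subst hk; right; simp [hx]
      · left; simp [hx, hk])
    set w1' : Game N := adjust w1 (s + ∑ k, f w1 k) with hw1'
    have hw1'f : ∀ k, f w1' k = x k := fun k => (hadjf _ _ k).trans (hw1f k)
    have hw1's : w1'.1 Finset.univ - ∑ k, f w1' k = s := by
      rw [adjust_univ]
      have : ∑ k, f w1' k = ∑ k, f w1 k := Finset.sum_congr rfl fun k _ => hadjf _ _ k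
      rw [this]; ring
    -- step 1: φ v i = φ w1' i
    have step1 : φ v i = φ w1' i := by
      apply hIES v w1' i
      · rw [hw1's]
      · rw [hw1'f]; simp [hx]
    -- step 2: φ w1' j = c + s/nR for j ≠ i
    have step2 : ∀ j, j ≠ i → φ w1' j = c + s / nR := by
      intro j hj
      have := hIES w1' w0' j (by rw [hw1's, hw0's]) (by rw [hw1'f, hw0'f]; simp [hx, hj])
      rw [this, hw0'val]
    -- step 3: efficiency on w1'
    have hEff1 : ∑ k, φ w1' k = s + ∑ k, f w1 k := by
      rw [hE w1']; exact adjust_univ _ _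
    have hfw1 : ∑ k, f w1 k = f v i + (nR - 1) * c := by
      rw [Finset.sum_congr rfl (fun k _ => hw1f k)]
      rw [← Finset.add_sum_erase _ x (Finset.mem_univ i)]
      have h1' : x i = f v i := by simp [hx]
      have h2' : ∑ k ∈ Finset.univ.erase i, x k = (nR - 1) * c := by
        rw [Finset.sum_congr rfl (fun k hk => show x k = c by
          simp [hx, Finset.ne_of_mem_erase hk])]
        rw [Finset.sum_const, nsmul_eq_mul, Finset.card_erase_of_mem (Finset.mem_univ i),
          Finset.card_univ]
        have hcard : (1 : ℕ) ≤ Fintype.card N := Fintype.card_pos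
        push_cast [hcard]
        ring
      rw [h1', h2']
    have hsplit : ∑ k, φ w1' k = φ w1' i + (nR - 1) * (c + s / nR) := by
      rw [← Finset.add_sum_erase _ (φ w1') (Finset.mem_univ i)]
      congr 1
      rw [Finset.sum_congr rfl (fun k hk => step2 k (Finset.ne_of_mem_erase hk))]
      rw [Finset.sum_const, nsmul_eq_mul, Finset.card_erase_of_mem (Finset.mem_univ i),
        Finset.card_univ]
      have hcard : (1 : ℕ) ≤ Fintype.card N := Fintype.card_pos
      push_cast [hcard]
      ring
    have : φ w1' i = f v i + 1 / nR * s := by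
      rw [hsplit, hfw1] at hEff1
      field_simp at hEff1 ⊢
      linarith
    rw [step1, this]
  · intro h
    refine ⟨?_, ?_, ?_⟩
    · intro v
      simp only [h v]
      rw [Finset.sum_add_distrib, Finset.sum_const, Finset.card_univ, nsmul_eq_mul]
      field_simp
      ring
    · intro v i j hsym
      have hperm : permGame (Equiv.swap i j) v = v := by
        apply Subtype.ext
        funext S
        show v.1 (S.image (Equiv.swap i j).symm) = v.1 S
        rw [Equiv.symm_swap]
        exact swap_invariant hsym S
      have hfij : f v i = f v j := by
        have := h1 v (Equiv.swap i j) i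
        rwa [hperm, Equiv.swap_apply_left] at this
      rw [h v i, h v j, hfij]
    · intro v w i hsur hfi
      rw [h v i, h w i, hsur, hfi]

end Stmt13
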